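/- Let $E$ be a measurable space, $f : E \to \mathbb{R}$ a bounded measurable function with $\sup|f| = R$, and let $(X_n)_{n\ge 0}$ be a Markov chain on $E$ such that $\mathbb{E}_x[f(X_1)] \le 0$ for every $x \in E$. Then for every $\varepsilon \in (0,1/2]$, setting $\gamma = \varepsilon/(1+R)^2$, we have for all $x \in E$ and $n \ge 0$: $\mathbb{P}_x\left(\sum_{i=1}^n f(X_i) \ge 2\varepsilon n\right) \le \exp(-\gamma\varepsilon n)$. -/
import Mathlib


open MeasureTheory ProbabilityTheory

private lemma exp_le_quadratic {x : ℝ} (hx : |x| ≤ 1) : Real.exp x ≤ 1 + x + x ^ 2 := by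
  have h := Real.exp_bound hx (n := 2) (by norm_num)
  have h2 : ∑ m ∈ Finset.range 2, x ^ m / (m.factorial : ℝ) = 1 + x := by
    simp [Finset.sum_range_succ]
  rw [h2] at h
  have h3 : |x| ^ 2 = x ^ 2 := sq_abs x
  norm_num [Nat.factorial] at h
  have := abs_le.1 h
  nlinarith [sq_nonneg x]

/-- **Large deviation estimate for Markov chains with nonpositive drift.**
The Markov chain `(Xₙ)` on `E` is encoded by its transition kernel `κ` (a Markov
kernel), and `Q n x t = ℙₓ(∑_{i=1}^n f (X i) ≥ t)` is encoded by its defining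
recursion, a consequence of the Markov property:
`Q 0 x t = [t ≤ 0]` and `Q (n+1) x t = ∫ Q n y (t - f y) ∂(κ x)`.
If `|f| ≤ R` pointwise (with `R = sup |f|`), the drift condition `𝔼ₓ[f (X₁)] ≤ 0`
holds for all `x`, and `0 < ε ≤ 1/2`, `γ = ε / (1+R)²`, then
`ℙₓ(∑_{i=1}^n f (X i) ≥ 2 ε n) ≤ exp (-γ ε n)` for all `x` and `n`. -/
theorem stmt3 {E : Type*} [MeasurableSpace E]
    (κ : Kernel E E) [IsMarkovKernel κ]
    (f : E → ℝ) (hf : Measurable f)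
    (R : ℝ) (hR0 : 0 ≤ R) (hfR : ∀ x, |f x| ≤ R)
    (hdrift : ∀ x, ∫ y, f y ∂(κ x) ≤ 0)
    (ε γ : ℝ) (hε0 : 0 < ε) (hε : ε ≤ 1 / 2) (hγ : γ = ε / (1 + R) ^ 2)
    (Q : ℕ → E → ℝ → ℝ)
    (hQ0 : ∀ x t, Q 0 x t = if t ≤ 0 then 1 else 0)
    (hQrec : ∀ n x t, Q (n + 1) x t = ∫ y, Q n y (t - f y) ∂(κ x)) :
    ∀ (x : E) (n : ℕ), Q n x (2 * ε * n) ≤ Real.exp (-(γ * ε * n)) := by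
  have hR1 : (0:ℝ) < (1 + R) ^ 2 := by positivity
  have hγ0 : 0 < γ := by rw [hγ]; positivity
  have hγR : γ * R ≤ 1 := by
    rw [hγ, div_mul_eq_mul_div, div_le_one hR1]
    nlinarith
  have hγR2 : γ * R ^ 2 ≤ ε := by
    rw [hγ, div_mul_eq_mul_div, div_le_iff₀ hR1]
    nlinarith
  -- integrability facts
  have hif : ∀ x : E, Integrable f (κ x) := fun x =>
    (integrable_const R).mono' hf.aestronglyMeasurable
      (Filter.Eventually.of_forall fun y => by simpa using hfR y)
  have hme : Measurable fun y => Real.exp (γ * f y) := (hf.const_mul γ).exp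
  have hie : ∀ x : E, Integrable (fun y => Real.exp (γ * f y)) (κ x) := fun x =>
    (integrable_const (Real.exp (γ * R))).mono' hme.aestronglyMeasurable
      (Filter.Eventually.of_forall fun y => by
        rw [Real.norm_eq_abs, abs_of_pos (Real.exp_pos _)]
        exact Real.exp_le_exp.2 (by nlinarith [hfR y, abs_le.1 (hfR y)]))
  -- exponential moment bound
  have hmoment : ∀ x : E, ∫ y, Real.exp (γ * f y) ∂(κ x) ≤ Real.exp (γ * ε) := by
    intro x
    have hpt : ∀ y, Real.exp (γ * f y) ≤ 1 + γ * R ^ 2 * γ + γ * f y := by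
      intro y
      have habs : |γ * f y| ≤ 1 := by
        rw [abs_mul, abs_of_pos hγ0]
        calc γ * |f y| ≤ γ * R := by nlinarith [hfR y]
          _ ≤ 1 := hγR
      have h1 := exp_le_quadratic habs
      have h2 : (γ * f y) ^ 2 ≤ γ * R ^ 2 * γ := by
        have h4 := sq_le_sq' (neg_le_of_abs_le (hfR y)) (le_of_abs_le (hfR y))
        have h5 := mul_le_mul_of_nonneg_left h4 (sq_nonneg γ)
        nlinarith
      nlinarith
    have hgint : Integrable (fun y => 1 + γ * R ^ 2 * γ + γ * f y) (κ x) :=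
      (integrable_const _).add ((hif x).const_mul γ)
    calc ∫ y, Real.exp (γ * f y) ∂(κ x)
        ≤ ∫ y, (1 + γ * R ^ 2 * γ + γ * f y) ∂(κ x) :=
          integral_mono (hie x) hgint hpt
      _ = (1 + γ * R ^ 2 * γ) + γ * ∫ y, f y ∂(κ x) := by
          rw [integral_add (integrable_const _) ((hif x).const_mul γ),
            integral_const, integral_const_mul]
          simp
      _ ≤ 1 + γ * R ^ 2 * γ := by nlinarith [hdrift x]
      _ ≤ 1 + γ * ε := by nlinarith
      _ ≤ Real.exp (γ * ε) := by linarith [Real.add_one_le_exp (γ * ε)]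
  -- nonnegativity of Q
  have hQnn : ∀ n (x : E) (t : ℝ), 0 ≤ Q n x t := by
    intro n
    induction n with
    | zero => intro x t; rw [hQ0]; split <;> norm_num
    | succ n ih =>
      intro x t
      rw [hQrec]
      exact integral_nonneg fun y => ih y _
  -- key estimate by induction
  have key : ∀ n (x : E) (t : ℝ), Q n x t ≤ Real.exp (γ * (ε * n - t)) := by
    intro n
    induction n with
    | zero =>
      intro x t
      rw [hQ0]
      split
      · next h =>
        rw [show γ * (ε * (0:ℕ) - t) = γ * (-t) by push_cast; ring]
        exact Real.one_le_exp (by nlinarith)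
      · exact le_of_lt (Real.exp_pos _)
    | succ n ih =>
      intro x t
      rw [hQrec]
      have hbd : ∀ y, Q n y (t - f y)
          ≤ Real.exp (γ * (ε * n - t)) * Real.exp (γ * f y) := by
        intro y
        calc Q n y (t - f y) ≤ Real.exp (γ * (ε * n - (t - f y))) := ih y _
          _ = Real.exp (γ * (ε * n - t)) * Real.exp (γ * f y) := by
            rw [← Real.exp_add]; ring_nf
      calc ∫ y, Q n y (t - f y) ∂(κ x)
          ≤ ∫ y, Real.exp (γ * (ε * n - t)) * Real.exp (γ * f y) ∂(κ x) :=
            integral_mono_of_nonneg (Filter.Eventually.of_forall fun y => hQnn n y _)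
              ((hie x).const_mul _) (Filter.Eventually.of_forall hbd)
        _ = Real.exp (γ * (ε * n - t)) * ∫ y, Real.exp (γ * f y) ∂(κ x) :=
            integral_const_mul _ _
        _ ≤ Real.exp (γ * (ε * n - t)) * Real.exp (γ * ε) := by
            exact mul_le_mul_of_nonneg_left (hmoment x) (le_of_lt (Real.exp_pos _))
        _ = Real.exp (γ * (ε * (n + 1 : ℕ) - t)) := by
            rw [← Real.exp_add]; push_cast; ring_nf
  intro x n
  have := key n x (2 * ε * n)
  rwa [show γ * (ε * n - 2 * ε * n) = -(γ * ε * n) by ring] at this
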